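/- Let f : ℝ^m \ {0} → [0,∞) be continuous with compact support contained in {z : c^{-1} ≤ ‖z‖ ≤ c} and bounded by M. Let μ_t, μ be Radon measures on ℝ^{d}\{0} with μ_t → μ vaguely and μ({x : ‖x‖ > r}) → 0 as r → ∞. Let ψ : ℝ^d × ℝ^{d'} → ℝ^m be continuous and (a,b)-bihomogeneous with a,b > 0. Then for each fixed y ≠ 0, ∫ f(ψ(x,y)) μ_t(dx) → ∫ f(ψ(x,y)) μ(dx) as t → ∞, even though x ↦ f(ψ(x,y)) need not have compact support, provided μ_t({‖x‖ > r}) → μ({‖x‖ > r}) for all large r. -/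

import Mathlib

open MeasureTheory Filter Topology

/-- Extension of vague convergence to integrands without compact support:
if `μ_t → μ` vaguely on `ℝ^d∖{0}`, `μ({‖x‖ > r}) → 0` as `r → ∞`,
`μ_t({‖x‖ > r}) → μ({‖x‖ > r})` for all large `r`, `ψ` is continuous
`(a,b)`-bihomogeneous and `f ≥ 0` is continuous with support in an annulus,
then for each fixed `y ≠ 0`,
`∫ f(ψ(x,y)) μ_t(dx) → ∫ f(ψ(x,y)) μ(dx)` as `t → ∞`. -/
theorem stmt16 {dd d' m : ℕ}
    (f : EuclideanSpace ℝ (Fin m) → ℝ) (hf : Continuous f) (hfnn : ∀ z, 0 ≤ f z)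
    (c M : ℝ) (hc : 0 < c)
    (hsupp : ∀ z, f z ≠ 0 → c⁻¹ ≤ ‖z‖ ∧ ‖z‖ ≤ c) (hfbdd : ∀ z, f z ≤ M)
    (μt : ℝ → Measure (EuclideanSpace ℝ (Fin dd)))
    (μ : Measure (EuclideanSpace ℝ (Fin dd)))
    (hμRadon : ∀ r : ℝ, 0 < r → μ {x | ‖x‖ > r} ≠ ⊤)
    (hμtRadon : ∀ t : ℝ, ∀ r : ℝ, 0 < r → μt t {x | ‖x‖ > r} ≠ ⊤)
    (hvague : ∀ g : EuclideanSpace ℝ (Fin dd) → ℝ, Continuous g → (∀ x, 0 ≤ g x) →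
      (∃ c' > (0:ℝ), ∀ x, g x ≠ 0 → c'⁻¹ ≤ ‖x‖ ∧ ‖x‖ ≤ c') →
      Tendsto (fun t => ∫ x, g x ∂(μt t)) atTop (𝓝 (∫ x, g x ∂μ)))
    (hμtail : Tendsto (fun r : ℝ => (μ {x | ‖x‖ > r}).toReal) atTop (𝓝 0))
    (hμttail : ∃ r₀ : ℝ, ∀ r > r₀,
      Tendsto (fun t => (μt t {x | ‖x‖ > r}).toReal) atTop (𝓝 ((μ {x | ‖x‖ > r}).toReal)))
    (ψ : EuclideanSpace ℝ (Fin dd) × EuclideanSpace ℝ (Fin d') → EuclideanSpace ℝ (Fin m))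
    (hψ : Continuous ψ)
    (a b : ℝ) (ha : 0 < a) (hb : 0 < b)
    (hhom : ∀ s t : ℝ, 0 ≤ s → 0 ≤ t →
      ∀ (x : EuclideanSpace ℝ (Fin dd)) (y : EuclideanSpace ℝ (Fin d')),
        ψ (s • x, t • y) = (s ^ a * t ^ b) • ψ (x, y))
    (y : EuclideanSpace ℝ (Fin d')) (hy : y ≠ 0) :
    Tendsto (fun t => ∫ x, f (ψ (x, y)) ∂(μt t)) atTop
      (𝓝 (∫ x, f (ψ (x, y)) ∂μ)) := by

  classical
  have hEdef : True := trivial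
  set g : EuclideanSpace ℝ (Fin dd) → ℝ := fun x => f (ψ (x, y)) with hgdef
  have hM : 0 ≤ M := le_trans (hfnn 0) (hfbdd 0)
  have hgc : Continuous g := by fun_prop
  have hgnn : ∀ x, 0 ≤ g x := fun x => hfnn _
  have hgbdd : ∀ x, g x ≤ M := fun x => hfbdd _
  -- ψ(0,y) = 0
  have hψ0 : ψ ((0 : EuclideanSpace ℝ (Fin dd)), y) = 0 := by
    have h := hhom 0 1 le_rfl zero_le_one 0 y
    simpa [Real.zero_rpow ha.ne'] using h
  -- δ such that g vanishes on the ball of radius δ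
  obtain ⟨δ, hδpos, hδ⟩ : ∃ δ > (0:ℝ), ∀ x : EuclideanSpace ℝ (Fin dd), ‖x‖ < δ → g x = 0 := by
    have hcont : ContinuousAt (fun x : EuclideanSpace ℝ (Fin dd) => ψ (x, y)) 0 := by
      have : Continuous (fun x : EuclideanSpace ℝ (Fin dd) => ψ (x, y)) := by fun_prop
      exact this.continuousAt
    rw [Metric.continuousAt_iff] at hcont
    obtain ⟨δ, hδpos, hδ⟩ := hcont c⁻¹ (by positivity)
    refine ⟨δ, hδpos, fun x hx => ?_⟩
    by_contra hgx
    have h1 := (hsupp _ hgx).1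
    have h2 := hδ (by simpa using hx)
    rw [hψ0, dist_zero_right] at h2
    linarith
  have hmeas : ∀ s : ℝ, MeasurableSet {x : EuclideanSpace ℝ (Fin dd) | ‖x‖ > s} :=
    fun s => measurableSet_lt measurable_const measurable_norm
  -- the main ε-argument
  rw [Metric.tendsto_nhds]
  intro ε hε
  have hε' : (0:ℝ) < ε / (4 * (M + 1)) := by positivity
  obtain ⟨r₀, hr₀⟩ := hμttail
  obtain ⟨r, hrr₀, hrpos, hrtail⟩ :
      ∃ r : ℝ, r > r₀ ∧ 0 < r ∧ (μ {x | ‖x‖ > r}).toReal < ε / (4 * (M + 1)) := by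
    have h1 : ∀ᶠ r in atTop, (μ {x : EuclideanSpace ℝ (Fin dd) | ‖x‖ > r}).toReal < ε / (4 * (M + 1)) :=
      hμtail.eventually (gt_mem_nhds hε')
    obtain ⟨r, h⟩ := ((eventually_gt_atTop r₀).and ((eventually_gt_atTop 0).and h1)).exists
    exact ⟨r, h.1, h.2.1, h.2.2⟩
  -- cutoff function
  set χ : EuclideanSpace ℝ (Fin dd) → ℝ := fun x => max 0 (min 1 (r + 1 - ‖x‖)) with hχdef
  have hχc : Continuous χ :=
    continuous_const.max (continuous_const.min (continuous_const.sub continuous_norm))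
  have hχnn : ∀ x, 0 ≤ χ x := fun x => le_max_left _ _
  have hχle1 : ∀ x, χ x ≤ 1 := fun x => max_le (by norm_num) (min_le_left _ _)
  have hχ1 : ∀ x : EuclideanSpace ℝ (Fin dd), ‖x‖ ≤ r → χ x = 1 := by
    intro x hx
    have : min 1 (r + 1 - ‖x‖) = 1 := min_eq_left (by linarith)
    simp [hχdef, this]
  have hχ0 : ∀ x : EuclideanSpace ℝ (Fin dd), χ x ≠ 0 → ‖x‖ < r + 1 := by
    intro x hx
    by_contra h
    push_neg at h
    have : min 1 (r + 1 - ‖x‖) ≤ 0 := le_trans (min_le_right _ _) (by linarith)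
    simp only [hχdef] at hx
    exact hx (max_eq_left this)
  set gχ : EuclideanSpace ℝ (Fin dd) → ℝ := fun x => g x * χ x with hgχdef
  -- integrability and tail estimate for a fixed measure
  have key : ∀ ν : Measure (EuclideanSpace ℝ (Fin dd)), (∀ s : ℝ, 0 < s → ν {x | ‖x‖ > s} ≠ ⊤) →
      Integrable g ν ∧ Integrable gχ ν ∧
      (∫ x, gχ x ∂ν) ≤ (∫ x, g x ∂ν) ∧
      (∫ x, g x ∂ν) - (∫ x, gχ x ∂ν) ≤ M * (ν {x | ‖x‖ > r}).toReal := by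
    intro ν hν
    have hSδ : ν {x : EuclideanSpace ℝ (Fin dd) | ‖x‖ > δ / 2} < ⊤ :=
      lt_top_iff_ne_top.mpr (hν (δ / 2) (by positivity))
    have hind : Integrable (({x : EuclideanSpace ℝ (Fin dd) | ‖x‖ > δ / 2}).indicator (fun _ => M)) ν := by
      rw [integrable_indicator_iff (hmeas _)]
      exact integrableOn_const hSδ.ne
    have hIg : Integrable g ν := by
      refine hind.mono' hgc.aestronglyMeasurable (Filter.Eventually.of_forall fun x => ?_)
      rw [Real.norm_eq_abs, abs_of_nonneg (hgnn x)]
      by_cases hx : x ∈ {x : EuclideanSpace ℝ (Fin dd) | ‖x‖ > δ / 2}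
      · rw [Set.indicator_of_mem hx]; exact hgbdd x
      · rw [Set.indicator_of_notMem hx]
        have hxδ : ‖x‖ < δ := by
          simp only [Set.mem_setOf_eq, not_lt] at hx
          linarith
        rw [hδ x hxδ]
    have hIgχ : Integrable gχ ν := by
      refine hIg.mono' (hgc.mul hχc).aestronglyMeasurable (Filter.Eventually.of_forall fun x => ?_)
      rw [Real.norm_eq_abs, abs_of_nonneg (mul_nonneg (hgnn x) (hχnn x))]
      calc g x * χ x ≤ g x * 1 := mul_le_mul_of_nonneg_left (hχle1 x) (hgnn x)
        _ = g x := mul_one _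
    have hle : (∫ x, gχ x ∂ν) ≤ (∫ x, g x ∂ν) := by
      refine integral_mono hIgχ hIg (fun x => ?_)
      calc g x * χ x ≤ g x * 1 := mul_le_mul_of_nonneg_left (hχle1 x) (hgnn x)
        _ = g x := mul_one _
    refine ⟨hIg, hIgχ, hle, ?_⟩
    have hSr : ν {x : EuclideanSpace ℝ (Fin dd) | ‖x‖ > r} < ⊤ := lt_top_iff_ne_top.mpr (hν r hrpos)
    have hindr : Integrable (({x : EuclideanSpace ℝ (Fin dd) | ‖x‖ > r}).indicator (fun _ => M)) ν := by
      rw [integrable_indicator_iff (hmeas _)]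
      exact integrableOn_const hSr.ne
    have hsub : (∫ x, g x ∂ν) - (∫ x, gχ x ∂ν) = ∫ x, (g x - gχ x) ∂ν :=
      (integral_sub hIg hIgχ).symm
    rw [hsub]
    have hmono : (∫ x, (g x - gχ x) ∂ν) ≤
        ∫ x, ({x : EuclideanSpace ℝ (Fin dd) | ‖x‖ > r}).indicator (fun _ => M) x ∂ν := by
      refine integral_mono (hIg.sub hIgχ) hindr (fun x => ?_)
      by_cases hx : x ∈ {x : EuclideanSpace ℝ (Fin dd) | ‖x‖ > r}
      · rw [Set.indicator_of_mem hx]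
        have h1 : g x * χ x ≥ 0 := mul_nonneg (hgnn x) (hχnn x)
        have := hgbdd x
        simp only [hgχdef]
        linarith
      · rw [Set.indicator_of_notMem hx]
        simp only [Set.mem_setOf_eq, not_lt] at hx
        simp only [hgχdef, hχ1 x hx, mul_one, sub_self, le_refl]
    calc (∫ x, (g x - gχ x) ∂ν) ≤ _ := hmono
      _ = (ν {x : EuclideanSpace ℝ (Fin dd) | ‖x‖ > r}).toReal • M := integral_indicator_const M (hmeas r)
      _ = M * (ν {x | ‖x‖ > r}).toReal := by rw [smul_eq_mul, mul_comm]
  -- vague convergence for the truncated function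
  have hA : Tendsto (fun t => ∫ x, gχ x ∂(μt t)) atTop (𝓝 (∫ x, gχ x ∂μ)) := by
    refine hvague gχ (hgc.mul hχc) (fun x => mul_nonneg (hgnn x) (hχnn x)) ?_
    refine ⟨max (r + 1) δ⁻¹, lt_max_of_lt_right (by positivity), fun x hx => ?_⟩
    have hg0 : g x ≠ 0 := fun h => hx (by simp [hgχdef, h])
    have hχx : χ x ≠ 0 := fun h => hx (by simp [hgχdef, h])
    constructor
    · have h1 : (max (r + 1) δ⁻¹)⁻¹ ≤ δ⁻¹⁻¹ :=
        inv_anti₀ (by positivity) (le_max_right _ _)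
      rw [inv_inv] at h1
      refine le_trans h1 ?_
      by_contra h
      push_neg at h
      exact hg0 (hδ x h)
    · exact le_trans (hχ0 x hχx).le (le_max_left _ _)
  have hB : Tendsto (fun t => (μt t {x | ‖x‖ > r}).toReal) atTop
      (𝓝 ((μ {x | ‖x‖ > r}).toReal)) := hr₀ r hrr₀
  have hAe : ∀ᶠ t in atTop, dist (∫ x, gχ x ∂(μt t)) (∫ x, gχ x ∂μ) < ε / 4 :=
    (Metric.tendsto_nhds.mp hA) (ε / 4) (by positivity)
  have hBe : ∀ᶠ t in atTop,
      (μt t {x | ‖x‖ > r}).toReal < (μ {x | ‖x‖ > r}).toReal + ε / (4 * (M + 1)) :=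
    hB.eventually (gt_mem_nhds (lt_add_of_pos_right _ hε'))
  filter_upwards [hAe, hBe] with t h1 h2
  obtain ⟨_, _, hle1, hdiff1⟩ := key (μt t) (hμtRadon t)
  obtain ⟨_, _, hle2, hdiff2⟩ := key μ hμRadon
  rw [Real.dist_eq] at h1 ⊢
  have hfrac : M / (M + 1) ≤ 1 := by
    rw [div_le_one (by positivity)]; linarith
  have hMe : M * (ε / (4 * (M + 1))) ≤ ε / 4 := by
    have : M * (ε / (4 * (M + 1))) = (M / (M + 1)) * (ε / 4) := by
      field_simp
      try ring
      try exact Or.inl trivial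
    rw [this]
    nlinarith
  have hT : M * (μ {x | ‖x‖ > r}).toReal ≤ ε / 4 := by
    have := mul_le_mul_of_nonneg_left hrtail.le hM
    linarith
  have hTt : M * (μt t {x | ‖x‖ > r}).toReal ≤ 3 * (ε / 4) := by
    have h3 := mul_le_mul_of_nonneg_left h2.le hM
    have h4 : M * ((μ {x | ‖x‖ > r}).toReal + ε / (4 * (M + 1)))
        = M * (μ {x | ‖x‖ > r}).toReal + M * (ε / (4 * (M + 1))) := by ring
    rw [h4] at h3
    linarith
  rw [abs_lt] at h1 ⊢
  constructor <;> [skip; skip] <;>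
  · simp only [hgdef, hgχdef] at *
    linarith
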